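/- Let e_n be defined by e_0 = 0, e_1 = 1, and for n ≥ 2, e_n = (1/2)(e_{n-1} + 1) + (1/2) ∑_{k=2}^{n} P(J_n = k)(e_{n-k} + k - 1), where P(J_n = k) = (1 + [k=n])/2^{k-1} for 2 ≤ k ≤ n. Then e_n = 3n/4 for all n ≥ 2. -/

import Mathlib

open Finset
lemma sumA (n : ℕ) : ∑ k ∈ Finset.Icc 2 (n+2), (1:ℝ)/2^(k-1) = 1 - 1/2^(n+1) := by
  induction n with
  | zero => norm_num [Finset.Icc_self]
  | succ m ih =>
    rw [show m+1+2 = (m+2)+1 from rfl, Finset.sum_Icc_succ_top (by omega), ih,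
      show (m+2+1-1) = m+2 from rfl]
    have h : (2:ℝ)^(m+2) = 2^(m+1) * 2 := pow_succ 2 (m+1)
    have h2 : (2:ℝ)^(m+1) ≠ 0 := by positivity
    rw [h]; field_simp; ring

lemma sumB (n : ℕ) : ∑ k ∈ Finset.Icc 2 (n+2), (k:ℝ)/2^(k-1) = 3 - ((n:ℝ)+4)/2^(n+1) := by
  induction n with
  | zero => norm_num [Finset.Icc_self]
  | succ m ih =>
    rw [show m+1+2 = (m+2)+1 from rfl, Finset.sum_Icc_succ_top (by omega), ih,
      show (m+2+1-1) = m+2 from rfl]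
    have h : (2:ℝ)^(m+2) = 2^(m+1) * 2 := pow_succ 2 (m+1)
    have h2 : (2:ℝ)^(m+1) ≠ 0 := by positivity
    rw [h]; field_simp; push_cast; ring


/-- Let `e n = E(X_n)` satisfy `e 0 = 0`, `e 1 = 1` and, for `n ≥ 2`,
`e n = (1/2)(e (n-1) + 1) + (1/2) ∑_{k=2}^{n} P(J_n = k)(e (n-k) + k - 1)` with
`P(J_n = k) = (1 + [k = n])/2^(k-1)`. Then `e n = 3n/4` for all `n ≥ 2`. -/
theorem shelf_guessing_expectation (e : ℕ → ℝ)
    (h0 : e 0 = 0) (h1 : e 1 = 1)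
    (hrec : ∀ n, 2 ≤ n → e n =
      (1/2) * (e (n - 1) + 1)
      + (1/2) * ∑ k ∈ Finset.Icc 2 n,
          ((1 + if k = n then 1 else 0) / 2 ^ (k - 1)) * (e (n - k) + (k : ℝ) - 1)) :
    ∀ n, 2 ≤ n → e n = 3 * n / 4 := by
  intro n
  induction n using Nat.strong_induction_on with
  | _ n ih =>
    intro hn
    rcases eq_or_lt_of_le hn with h2 | h3
    · rw [← h2, hrec 2 le_rfl]
      norm_num [Finset.Icc_self, h0, h1]
    · obtain ⟨m, rfl⟩ : ∃ m, n = m + 3 := ⟨n - 3, by omega⟩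
      have ihe : ∀ j, 2 ≤ j → j < m+3 → e j = 3*j/4 := fun j hj1 hj2 => ih j hj2 hj1
      -- pointwise value of e (m+3-k) + k - 1
      have hval : ∀ k ∈ Finset.Icc 2 (m+3),
          ((1:ℝ)/2^(k-1)) * (e (m+3-k) + (k:ℝ) - 1)
          = (1/2^(k-1)) * ((3*((m:ℝ)+3)/4 - 1) + (k:ℝ)/4)
            + (if k = m+2 then (1/2^(k-1)) * (1/4 : ℝ) else 0) := by
        intro k hk
        rw [Finset.mem_Icc] at hk
        rcases eq_or_ne k (m+2) with rfl | hk2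
        · rw [show m+3-(m+2) = 1 from by omega, h1, if_pos rfl]
          push_cast; ring
        · rw [if_neg hk2]
          rcases eq_or_ne k (m+3) with rfl | hk3
          · rw [show m+3-(m+3) = 0 from by omega, h0]
            push_cast; ring
          · have hge : 2 ≤ m+3-k := by omega
            rw [ihe _ hge (by omega)]
            have hc : ((m+3-k : ℕ):ℝ) = (m:ℝ)+3 - k := by
              have : (k:ℝ) ≤ (m:ℝ)+3 := by exact_mod_cast hk.2
              push_cast [Nat.cast_sub hk.2]; ring
            rw [hc]; ring
      -- split the (1+δ) coefficient
      have hsplit : ∀ k ∈ Finset.Icc 2 (m+3),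
          ((1 + if k = m+3 then (1:ℝ) else 0) / 2^(k-1)) * (e (m+3-k) + (k:ℝ) - 1)
          = ((1:ℝ)/2^(k-1)) * (e (m+3-k) + (k:ℝ) - 1)
            + (if k = m+3 then ((1:ℝ)/2^(k-1)) * (e (m+3-k) + (k:ℝ) - 1) else 0) := by
        intro k _
        split_ifs <;> ring
      rw [hrec (m+3) (by omega), Finset.sum_congr rfl hsplit, Finset.sum_add_distrib,
        Finset.sum_congr rfl hval, Finset.sum_add_distrib, Finset.sum_ite_eq',
        Finset.sum_ite_eq']
      have hmem2 : m+2 ∈ Finset.Icc 2 (m+3) := Finset.mem_Icc.mpr (by omega)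
      have hmem3 : m+3 ∈ Finset.Icc 2 (m+3) := by simp [Finset.mem_Icc]
      rw [if_pos hmem2, if_pos hmem3]
      -- evaluate the main sum
      have hmain : ∑ k ∈ Finset.Icc 2 (m+3),
          ((1:ℝ)/2^(k-1)) * ((3*((m:ℝ)+3)/4 - 1) + (k:ℝ)/4)
          = (3*((m:ℝ)+3)/4 - 1) * (1 - 1/2^(m+2)) + (1/4) * (3 - ((m:ℝ)+5)/2^(m+2)) := by
        have hA := sumA (m+1)
        have hB := sumB (m+1)
        rw [show m+1+2 = m+3 from rfl] at hA hB
        rw [show ∑ k ∈ Finset.Icc 2 (m+3), ((1:ℝ)/2^(k-1)) * ((3*((m:ℝ)+3)/4 - 1) + (k:ℝ)/4)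
            = (3*((m:ℝ)+3)/4 - 1) * (∑ k ∈ Finset.Icc 2 (m+3), (1:ℝ)/2^(k-1))
              + (1/4) * (∑ k ∈ Finset.Icc 2 (m+3), (k:ℝ)/2^(k-1)) from by
          rw [Finset.mul_sum, Finset.mul_sum, ← Finset.sum_add_distrib]
          exact Finset.sum_congr rfl fun k _ => by ring]
        rw [hA, hB]; push_cast; ring
      rw [hmain]
      simp only [show m+3-1 = m+2 from by omega, show m+2-1 = m+1 from by omega,
        Nat.sub_self, h0]
      rw [ihe (m+2) (by omega) (by omega)]
      have hp : (2:ℝ)^(m+2) = 2^(m+1) * 2 := pow_succ 2 (m+1)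
      have h2 : (2:ℝ)^(m+1) ≠ 0 := by positivity
      rw [hp]; push_cast; field_simp; ring
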